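/- Let F : ℝⁿ → ℝ ∪ {+∞} be proper, and suppose X* satisfies: for every direction decomposition into blocks i = 1,…,N there exist constants cᵢ ≥ 0 such that F(X*) ≤ F(X* + δᵢ) + (cᵢ/2)‖δᵢ‖² for all perturbations δᵢ supported in block i, and F(X) = Q(X) + Σᵢ hᵢ(xᵢ) where Q is C¹ (so first-order Taylor applies) and each hᵢ depends only on block i. Then lim inf_{‖δX‖→0} (F(X* + δX) − F(X*))/‖δX‖ ≥ 0, i.e., 0 belongs to the Fréchet subdifferential of F at X*, so X* is a stationary point. -/

import Mathlib

open Filter InnerProductSpace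

lemma piLp_apply_norm_le {ι : Type*} [Fintype ι] {β : ι → Type*}
    [∀ i, SeminormedAddCommGroup (β i)] (x : PiLp 2 β) (i : ι) : ‖x i‖ ≤ ‖x‖ := by
  have h1 : ‖x i‖ ^ 2 ≤ ‖x‖ ^ 2 := by
    rw [PiLp.norm_sq_eq_of_L2]
    exact Finset.single_le_sum (f := fun j => ‖x j‖ ^ 2)
      (fun j _ => by positivity) (Finset.mem_univ i)
  nlinarith [norm_nonneg x, norm_nonneg (x i)]

open scoped RealInnerProductSpace in
/-- The Fréchet subdifferential of `F` at `x`. -/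
def frechetSubdiff {E : Type*} [NormedAddCommGroup E] [InnerProductSpace ℝ E]
    (F : E → ℝ) (x : E) : Set E :=
  {w | ∀ ε > (0 : ℝ), ∀ᶠ y in nhds x, F x + ⟪w, y - x⟫ - ε * ‖y - x‖ ≤ F y}

set_option maxHeartbeats 1000000 in
/-- A blockwise prox-minimizer of `F = Q + Σᵢ hᵢ`, with `Q` smooth and the
`hᵢ` block-separable, is a stationary point: `0 ∈ ∂_F F(X*)`. -/
theorem stmt_15 {N : ℕ} {d : Fin N → ℕ}
    (F : PiLp 2 (fun i : Fin N => EuclideanSpace ℝ (Fin (d i))) → ℝ)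
    (Q : PiLp 2 (fun i : Fin N => EuclideanSpace ℝ (Fin (d i))) → ℝ)
    (h : ∀ i : Fin N, EuclideanSpace ℝ (Fin (d i)) → ℝ)
    (hQ : ContDiff ℝ 1 Q)
    (hF : ∀ x, F x = Q x + ∑ i, h i (x i))
    (Xstar : PiLp 2 (fun i : Fin N => EuclideanSpace ℝ (Fin (d i))))
    (hblock : ∀ i : Fin N, ∃ c : ℝ, 0 ≤ c ∧
      ∀ δ : PiLp 2 (fun i : Fin N => EuclideanSpace ℝ (Fin (d i))),
        (∀ j, j ≠ i → δ j = 0) → F Xstar ≤ F (Xstar + δ) + c / 2 * ‖δ‖ ^ 2) :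
    (0 : PiLp 2 (fun i : Fin N => EuclideanSpace ℝ (Fin (d i)))) ∈
      frechetSubdiff F Xstar := by
  classical
  intro ε hε
  choose c hc0 hc using hblock
  set C : ℝ := ∑ i, c i / 2 with hC
  have hC0 : 0 ≤ C := Finset.sum_nonneg fun i _ => by linarith [hc0 i]
  set f' := fderiv ℝ Q Xstar with hf'
  have hdiff : HasFDerivAt Q f' Xstar := ((hQ.differentiable one_ne_zero) Xstar).hasFDerivAt
  set ε' : ℝ := ε / (2 * (N + 1)) with hε'def
  have hN1 : (0 : ℝ) < (N : ℝ) + 1 := by positivity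
  have hε' : 0 < ε' := by
    rw [hε'def]; positivity
  have hlo := hdiff.isLittleO.def hε'
  rw [Metric.eventually_nhds_iff_ball] at hlo
  obtain ⟨r, hr0, hr⟩ := hlo
  set r₂ : ℝ := min r (ε / (2 * (C + 1)))
  have hr₂0 : 0 < r₂ := lt_min hr0 (by positivity)
  rw [Metric.eventually_nhds_iff_ball]
  refine ⟨r₂, hr₂0, fun y hy => ?_⟩
  have hyr : ‖y - Xstar‖ < r₂ := by simpa [Metric.mem_ball, dist_eq_norm] using hy
  set D : ℝ := ‖y - Xstar‖ with hD
  have hD0 : 0 ≤ D := norm_nonneg _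
  -- block perturbations
  set δ : Fin N → PiLp 2 (fun i : Fin N => EuclideanSpace ℝ (Fin (d i))) := fun i =>
    (WithLp.equiv 2 (∀ j, EuclideanSpace ℝ (Fin (d j)))).symm
      (Pi.single i ((y - Xstar) i)) with hδdef
  have hδnorm : ∀ i, ‖δ i‖ = ‖(y - Xstar) i‖ := fun i =>
    by simp only [hδdef, WithLp.equiv_symm_apply, PiLp.norm_toLp_single]
  have hδle : ∀ i, ‖δ i‖ ≤ D := fun i =>
    (hδnorm i).le.trans (piLp_apply_norm_le (y - Xstar) i)
  have hδsame : ∀ i, δ i i = y i - Xstar i := by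
    intro i
    simp only [hδdef, WithLp.equiv_symm_apply, WithLp.ofLp_toLp, Pi.single_eq_same]
    rfl
  have hδne : ∀ i j, j ≠ i → δ i j = 0 := by
    intro i j hj
    simp only [hδdef, WithLp.equiv_symm_apply, WithLp.ofLp_toLp, Pi.single_eq_of_ne hj]
  have hδsum : ∑ i, δ i = y - Xstar := by
    apply PiLp.ext
    intro j
    have happ : ∀ (z : PiLp 2 (fun i : Fin N => EuclideanSpace ℝ (Fin (d i)))),
        z j = PiLp.projₗ 2 (fun i : Fin N => EuclideanSpace ℝ (Fin (d i))) (𝕜 := ℝ) j z :=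
      fun z => rfl
    rw [happ (∑ i, δ i), map_sum]
    have heach : ∀ i, PiLp.projₗ 2 (fun i : Fin N => EuclideanSpace ℝ (Fin (d i))) (𝕜 := ℝ) j (δ i)
        = δ i j := fun _ => rfl
    simp only [heach]
    rw [Fintype.sum_eq_single j (fun i hij => hδne i j (Ne.symm hij)), hδsame]
    rfl
  -- little-o bound in ball form
  have hball : ∀ z, ‖z - Xstar‖ < r →
      |Q z - Q Xstar - f' (z - Xstar)| ≤ ε' * ‖z - Xstar‖ := by
    intro z hz
    have := hr z (by simpa [Metric.mem_ball, dist_eq_norm] using hz)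
    simpa using this
  have hDr : D < r := hyr.trans_le (min_le_left _ _)
  -- per-block bound
  have key : ∀ i, -(f' (δ i)) - ε' * ‖δ i‖ - c i / 2 * ‖δ i‖ ^ 2
      ≤ h i (y i) - h i (Xstar i) := by
    intro i
    have hineq := hc i (δ i) (hδne i)
    rw [hF, hF] at hineq
    have hblocksum : ∑ j, h j ((Xstar + δ i) j)
        = ∑ j, h j (Xstar j) + (h i (y i) - h i (Xstar i)) := by
      rw [← Finset.add_sum_erase Finset.univ _ (Finset.mem_univ i),
        ← Finset.add_sum_erase Finset.univ (fun j => h j (Xstar j)) (Finset.mem_univ i)]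
      have h1 : (Xstar + δ i) i = y i := by
        show Xstar i + δ i i = y i
        rw [hδsame]; abel
      have h2 : ∀ j ∈ Finset.univ.erase i, h j ((Xstar + δ i) j) = h j (Xstar j) := by
        intro j hj
        have : (Xstar + δ i) j = Xstar j := by
          show Xstar j + δ i j = Xstar j
          rw [hδne i j (Finset.ne_of_mem_erase hj)]; abel
        rw [this]
      rw [Finset.sum_congr rfl h2, h1]
      ring
    rw [hblocksum] at hineq
    have hQbound := hball (Xstar + δ i) (by
      rw [add_sub_cancel_left]
      exact (hδle i).trans_lt hDr)
    rw [add_sub_cancel_left] at hQbound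
    have habs := abs_le.mp hQbound
    linarith [habs.1, habs.2]
  -- sum the per-block bounds
  have hsumkey : -(f' (y - Xstar)) - ε' * ((N : ℝ) * D) - C * D ^ 2
      ≤ ∑ i, (h i (y i) - h i (Xstar i)) := by
    have h1 : ∑ i, (-(f' (δ i)) - ε' * ‖δ i‖ - c i / 2 * ‖δ i‖ ^ 2)
        ≤ ∑ i, (h i (y i) - h i (Xstar i)) :=
      Finset.sum_le_sum fun i _ => key i
    refine le_trans ?_ h1
    have hsplit : ∑ i, (-(f' (δ i)) - ε' * ‖δ i‖ - c i / 2 * ‖δ i‖ ^ 2)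
        = -(∑ i, f' (δ i)) - ε' * ∑ i, ‖δ i‖ - ∑ i, c i / 2 * ‖δ i‖ ^ 2 := by
      rw [Finset.sum_sub_distrib, Finset.sum_sub_distrib, Finset.mul_sum, ← Finset.sum_neg_distrib]
    rw [hsplit, ← map_sum f', hδsum]
    have hb1 : ∑ i, ‖δ i‖ ≤ (N : ℝ) * D := by
      calc ∑ i, ‖δ i‖ ≤ ∑ _i : Fin N, D := Finset.sum_le_sum fun i _ => hδle i
        _ = (N : ℝ) * D := by simp [Finset.sum_const, nsmul_eq_mul]
    have hb2 : ∑ i, c i / 2 * ‖δ i‖ ^ 2 ≤ C * D ^ 2 := by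
      rw [hC, Finset.sum_mul]
      refine Finset.sum_le_sum fun i _ => ?_
      have h3 := hδle i
      have h0 := norm_nonneg (δ i)
      have h4 : ‖δ i‖ ^ 2 ≤ D ^ 2 := by nlinarith
      nlinarith [hc0 i]
    have hmul := mul_le_mul_of_nonneg_left hb1 hε'.le
    linarith only [hmul, hb2]
  have hQy : f' (y - Xstar) - ε' * D ≤ Q y - Q Xstar := by
    have := (abs_le.mp (hball y hDr)).1
    linarith
  have hFy : F y - F Xstar = (Q y - Q Xstar) + ∑ i, (h i (y i) - h i (Xstar i)) := by
    rw [hF, hF, Finset.sum_sub_distrib]; ring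
  have hfinal : -(ε' * (((N : ℝ) + 1) * D)) - C * D ^ 2 ≤ F y - F Xstar := by
    rw [hFy]
    have hexp : ε' * (((N : ℝ) + 1) * D) = ε' * D + ε' * ((N : ℝ) * D) := by ring
    linarith
  have hquad : C * D ^ 2 ≤ ε / 2 * D := by
    have hDle : D ≤ ε / (2 * (C + 1)) := le_of_lt (hyr.trans_le (min_le_right _ _))
    have h1 : C * D ≤ (C + 1) * D := by nlinarith
    have h2 : (C + 1) * D ≤ (C + 1) * (ε / (2 * (C + 1))) :=
      mul_le_mul_of_nonneg_left hDle (by positivity)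
    have h3 : (C + 1) * (ε / (2 * (C + 1))) = ε / 2 := by
      field_simp
    nlinarith
  have hlin : ε' * (((N : ℝ) + 1) * D) = ε / 2 * D := by
    rw [hε'def]
    field_simp
  have hmain : -(ε * D) ≤ F y - F Xstar := by
    rw [hlin] at hfinal
    linarith
  have hip : (inner ℝ (0 : PiLp 2 (fun i : Fin N => EuclideanSpace ℝ (Fin (d i))))
      (y - Xstar) : ℝ) = 0 := inner_zero_left _
  rw [hip]
  linarith
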